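/- Fix an integer d ≥ 5 and define f : ℕ → ℤ by f(a) = C(a+3,3) − C(a−d+3,3) − 1 (the binomial coefficient C(n,3) being 0 when n < 3), and g(a) = (−1 + √(1+8f(a)))/2. Then for all integers a ≥ a' ≥ 1 with (a,a') ≠ (1,1) and (a,a') ≠ (2,1), one has g(a) + g(a') < g(a+a'). -/

import Mathlib

/-- `f d a = h⁰(O_S(a)) − 1` for a smooth surface `S ⊂ ℙ³` of degree `d`. -/
def fdeg (d a : ℕ) : ℤ := ((a + 3).choose 3 : ℤ) - ((a + 3 - d).choose 3 : ℤ) - 1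

/-- `g d a` is the unique nonnegative real with `g(g+1)/2 = f d a`. -/
noncomputable def gdeg (d a : ℕ) : ℝ :=
  (-1 + Real.sqrt (1 + 8 * (fdeg d a : ℝ))) / 2

lemma choose2' (n : ℕ) : 2 * Nat.choose (n+2) 2 = (n+1)*(n+2) := by
  induction n with
  | zero => rfl
  | succ k ih =>
    rw [show k+1+2 = (k+2)+1 from rfl, Nat.choose_succ_succ, Nat.mul_add, ih,
      Nat.choose_one_right]
    ring

lemma choose3' (n : ℕ) : 6 * Nat.choose (n+3) 3 = (n+1)*(n+2)*(n+3) := by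
  induction n with
  | zero => rfl
  | succ k ih =>
    rw [show k+1+3 = (k+3)+1 from rfl, Nat.choose_succ_succ, Nat.mul_add, ih,
      show (6:ℕ) = 3*2 from rfl, Nat.mul_assoc, choose2']
    ring

lemma zchoose3 (m : ℕ) : (6 * Nat.choose m 3 : ℤ) = (m:ℤ)*((m:ℤ)-1)*((m:ℤ)-2) := by
  match m with
  | 0 => decide
  | 1 => decide
  | 2 => decide
  | (k+3) =>
    have h := choose3' k
    zify at h
    push_cast
    linear_combination h

lemma fdeg_quad {d a : ℕ} (h : d ≤ a + 3) :
    6 * fdeg d a =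
      ((a:ℤ)+1)*((a:ℤ)+2)*((a:ℤ)+3) - ((a:ℤ)+1-d)*((a:ℤ)+2-d)*((a:ℤ)+3-d) - 6 := by
  unfold fdeg
  have h1 := zchoose3 (a+3)
  have h2 := zchoose3 (a+3-d)
  have hc : ((a + 3 - d : ℕ) : ℤ) = (a:ℤ) + 3 - d := by omega
  rw [hc] at h2
  push_cast at h1 h2 ⊢
  linear_combination h1 - h2

lemma fdeg_cub {d a : ℕ} (h : a + 1 ≤ d) :
    6 * fdeg d a = ((a:ℤ)+1)*((a:ℤ)+2)*((a:ℤ)+3) - 6 := by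
  unfold fdeg
  have hz : (a + 3 - d).choose 3 = 0 := Nat.choose_eq_zero_of_lt (by omega)
  have h1 := zchoose3 (a+3)
  rw [hz]
  push_cast at h1 ⊢
  linear_combination h1

lemma fdeg_ge3 {d a : ℕ} (hd : 5 ≤ d) (ha : 1 ≤ a) : 3 ≤ fdeg d a := by
  by_cases h : a + 1 ≤ d
  · have h6 := fdeg_cub h
    have ha' : (1:ℤ) ≤ (a:ℤ) := by exact_mod_cast ha
    nlinarith [sq_nonneg ((a:ℤ)-1), mul_nonneg (sub_nonneg.2 ha') (sq_nonneg ((a:ℤ)+1))]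
  · have hda : (d:ℤ) ≤ (a:ℤ) := by omega
    have h6 := fdeg_quad (show d ≤ a + 3 by omega)
    have hd' : (5:ℤ) ≤ (d:ℤ) := by exact_mod_cast hd
    have hx : (0:ℤ) ≤ (a:ℤ) - d := by linarith
    have hd0 : (0:ℤ) ≤ (d:ℤ) := by positivity
    nlinarith [mul_nonneg (mul_nonneg hd0 hx) hx, mul_nonneg (mul_nonneg hd0 hd0) hx,
      mul_nonneg hd0 hx, mul_nonneg (mul_nonneg hd0 hd0) hd0, mul_nonneg hd0 hd0]

lemma fdeg_quadR {d a : ℕ} (h : d ≤ a + 3) :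
    (fdeg d a : ℝ) =
      (((a:ℝ)+1)*((a:ℝ)+2)*((a:ℝ)+3) - ((a:ℝ)+1-d)*((a:ℝ)+2-d)*((a:ℝ)+3-d) - 6)/6 := by
  have := fdeg_quad h
  have h2 : (6 * fdeg d a : ℝ) =
      ((a:ℝ)+1)*((a:ℝ)+2)*((a:ℝ)+3) - ((a:ℝ)+1-d)*((a:ℝ)+2-d)*((a:ℝ)+3-d) - 6 := by
    exact_mod_cast congrArg (Int.cast : ℤ → ℝ) this
  push_cast at h2
  linarith

lemma fdeg_cubR {d a : ℕ} (h : a + 1 ≤ d) :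
    (fdeg d a : ℝ) = (((a:ℝ)+1)*((a:ℝ)+2)*((a:ℝ)+3) - 6)/6 := by
  have := fdeg_cub h
  have h2 : (6 * fdeg d a : ℝ) = ((a:ℝ)+1)*((a:ℝ)+2)*((a:ℝ)+3) - 6 := by
    exact_mod_cast congrArg (Int.cast : ℤ → ℝ) this
  push_cast at h2
  linarith

/-- Discrete convexity of `gdeg` at indices `≥ 1`. -/
lemma gdiff_step {d : ℕ} (hd : 5 ≤ d) {i : ℕ} (hi : 1 ≤ i) :
    gdeg d (i+1) - gdeg d i ≤ gdeg d (i+2) - gdeg d (i+1) := by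
  set Q0 : ℝ := 1 + 8 * (fdeg d i : ℝ) with hQ0
  set Q1 : ℝ := 1 + 8 * (fdeg d (i+1) : ℝ) with hQ1
  set Q2 : ℝ := 1 + 8 * (fdeg d (i+2) : ℝ) with hQ2
  have hf0 : (3:ℝ) ≤ (fdeg d i : ℝ) := by exact_mod_cast fdeg_ge3 hd hi
  have hf1 : (3:ℝ) ≤ (fdeg d (i+1) : ℝ) := by exact_mod_cast fdeg_ge3 hd (by omega)
  have hf2 : (3:ℝ) ≤ (fdeg d (i+2) : ℝ) := by exact_mod_cast fdeg_ge3 hd (by omega)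
  have hQ0n : (0:ℝ) ≤ Q0 := by rw [hQ0]; linarith
  have hQ1n : (0:ℝ) ≤ Q1 := by rw [hQ1]; linarith
  have hQ2n : (0:ℝ) ≤ Q2 := by rw [hQ2]; linarith
  have hi' : (1:ℝ) ≤ (i:ℝ) := by exact_mod_cast hi
  have hsq : (4*Q1 - Q0 - Q2)^2 ≤ 4*(Q0*Q2) := by
    by_cases hreg : i + 3 ≤ d
    · rw [hQ0, hQ1, hQ2, fdeg_cubR (show i+1 ≤ d by omega),
        fdeg_cubR (show (i+1)+1 ≤ d by omega), fdeg_cubR (show (i+2)+1 ≤ d by omega)]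
      push_cast
      have hj : (0:ℝ) ≤ (i:ℝ) - 1 := by linarith
      nlinarith [pow_nonneg hj 4, pow_nonneg hj 3, pow_nonneg hj 2, hj]
    · rw [hQ0, hQ1, hQ2, fdeg_quadR (show d ≤ i+3 by omega),
        fdeg_quadR (show d ≤ (i+1)+3 by omega), fdeg_quadR (show d ≤ (i+2)+3 by omega)]
      push_cast
      have he : (0:ℝ) ≤ (d:ℝ) - 5 := by
        have : (5:ℝ) ≤ (d:ℝ) := by exact_mod_cast hd
        linarith
      nlinarith [pow_nonneg he 4, pow_nonneg he 3, pow_nonneg he 2, he]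
  have hkey : 4*Q1 - Q0 - Q2 ≤ 2 * Real.sqrt (Q0*Q2) := by
    have h1 : 4*Q1 - Q0 - Q2 ≤ |4*Q1 - Q0 - Q2| := le_abs_self _
    have h2 : |4*Q1 - Q0 - Q2| = Real.sqrt ((4*Q1 - Q0 - Q2)^2) :=
      (Real.sqrt_sq_eq_abs _).symm
    have h3 : Real.sqrt ((4*Q1 - Q0 - Q2)^2) ≤ Real.sqrt (4*(Q0*Q2)) :=
      Real.sqrt_le_sqrt hsq
    have h4 : Real.sqrt (4*(Q0*Q2)) = 2 * Real.sqrt (Q0*Q2) := by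
      rw [show (4:ℝ)*(Q0*Q2) = 2^2*(Q0*Q2) by norm_num, Real.sqrt_mul (by positivity),
        Real.sqrt_sq (by norm_num)]
    linarith
  have hmain : 2 * Real.sqrt Q1 ≤ Real.sqrt Q0 + Real.sqrt Q2 := by
    have hsq2 : (2 * Real.sqrt Q1)^2 ≤ (Real.sqrt Q0 + Real.sqrt Q2)^2 := by
      have e1 : (2 * Real.sqrt Q1)^2 = 4 * Q1 := by
        rw [mul_pow, Real.sq_sqrt hQ1n]; ring
      have e2 : (Real.sqrt Q0 + Real.sqrt Q2)^2
          = Q0 + Q2 + 2 * Real.sqrt (Q0*Q2) := by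
        rw [add_sq, Real.sq_sqrt hQ0n, Real.sq_sqrt hQ2n, Real.sqrt_mul hQ0n]
        ring
      rw [e1, e2]; linarith
    have := Real.sqrt_le_sqrt hsq2
    rwa [Real.sqrt_sq (by positivity), Real.sqrt_sq (by positivity)] at this
  have g0 : gdeg d i = (-1 + Real.sqrt Q0)/2 := rfl
  have g1 : gdeg d (i+1) = (-1 + Real.sqrt Q1)/2 := rfl
  have g2 : gdeg d (i+2) = (-1 + Real.sqrt Q2)/2 := rfl
  rw [g0, g1, g2]
  linarith

/-- For `a ≥ 3` the gap of `gdeg` exceeds `2 = gdeg d 1`. -/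
lemma gstep {d : ℕ} (hd : 5 ≤ d) {a : ℕ} (ha : 3 ≤ a) :
    gdeg d a + 2 < gdeg d (a+1) := by
  set Q0 : ℝ := 1 + 8 * (fdeg d a : ℝ) with hQ0
  set Q1 : ℝ := 1 + 8 * (fdeg d (a+1) : ℝ) with hQ1
  have hf0 : (3:ℝ) ≤ (fdeg d a : ℝ) := by exact_mod_cast fdeg_ge3 hd (by omega)
  have hf1 : (3:ℝ) ≤ (fdeg d (a+1) : ℝ) := by exact_mod_cast fdeg_ge3 hd (by omega)
  have hQ0n : (0:ℝ) ≤ Q0 := by rw [hQ0]; linarith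
  have hQ1n : (0:ℝ) ≤ Q1 := by rw [hQ1]; linarith
  have ha' : (3:ℝ) ≤ (a:ℝ) := by exact_mod_cast ha
  have hd' : (5:ℝ) ≤ (d:ℝ) := by exact_mod_cast hd
  have hkey : 0 < Q1 - Q0 - 16 ∧ 64 * Q0 < (Q1 - Q0 - 16)^2 := by
    by_cases hreg : a + 2 ≤ d
    · rw [hQ0, hQ1, fdeg_cubR (show a+1 ≤ d by omega), fdeg_cubR (show (a+1)+1 ≤ d by omega)]
      push_cast
      have hj : (0:ℝ) ≤ (a:ℝ) - 3 := by linarith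
      constructor
      · nlinarith [pow_nonneg hj 2, hj]
      · nlinarith [pow_nonneg hj 4, pow_nonneg hj 3, pow_nonneg hj 2, hj]
    · rw [hQ0, hQ1, fdeg_quadR (show d ≤ a+3 by omega), fdeg_quadR (show d ≤ (a+1)+3 by omega)]
      push_cast
      have hs : (0:ℝ) ≤ (a:ℝ) - ((d:ℝ) - 1) := by
        have : d ≤ a + 1 := by omega
        have : (d:ℝ) ≤ (a:ℝ) + 1 := by exact_mod_cast this
        linarith
      have he : (0:ℝ) ≤ (d:ℝ) - 5 := by linarith
      constructor
      · nlinarith [mul_nonneg hs he, mul_nonneg (mul_nonneg hs he) he, pow_nonneg he 2]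
      · nlinarith [pow_nonneg he 4, pow_nonneg he 3, pow_nonneg he 2, he, hs,
          mul_nonneg hs he, mul_nonneg hs (pow_nonneg he 2), mul_nonneg hs (pow_nonneg he 3),
          mul_nonneg (mul_nonneg hs hs) he, mul_nonneg (mul_nonneg hs hs) (pow_nonneg he 2),
          mul_nonneg hs hs]
  obtain ⟨hT, hT2⟩ := hkey
  have h8 : 8 * Real.sqrt Q0 < Q1 - Q0 - 16 := by
    have h1 : Real.sqrt (64 * Q0) < Real.sqrt ((Q1 - Q0 - 16)^2) :=
      Real.sqrt_lt_sqrt (by positivity) hT2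
    rw [Real.sqrt_sq (le_of_lt hT)] at h1
    rw [show (64:ℝ)*Q0 = 8^2*Q0 by norm_num, Real.sqrt_mul (by positivity),
      Real.sqrt_sq (by norm_num)] at h1
    linarith
  have hmain : Real.sqrt Q0 + 4 < Real.sqrt Q1 := by
    have hsq : (Real.sqrt Q0 + 4)^2 < Q1 := by
      rw [add_sq, Real.sq_sqrt hQ0n]
      linarith
    have := Real.sqrt_lt_sqrt (by positivity) hsq
    rwa [Real.sqrt_sq (by positivity)] at this
  show (-1 + Real.sqrt Q0)/2 + 2 < (-1 + Real.sqrt Q1)/2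
  linarith

lemma gdiff_mono {d : ℕ} (hd : 5 ≤ d) {i j : ℕ} (hi : 1 ≤ i) (hij : i ≤ j) :
    gdeg d (i+1) - gdeg d i ≤ gdeg d (j+1) - gdeg d j := by
  induction j, hij using Nat.le_induction with
  | base => exact le_refl _
  | succ k hk ih =>
    calc gdeg d (i+1) - gdeg d i ≤ gdeg d (k+1) - gdeg d k := ih
    _ ≤ gdeg d (k+2) - gdeg d (k+1) := gdiff_step hd (le_trans hi hk)
    _ = gdeg d (k+1+1) - gdeg d (k+1) := rfl

lemma g_one {d : ℕ} (hd : 5 ≤ d) : gdeg d 1 = 2 := by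
  have h0 : 1 + 3 - d = 0 := by omega
  have hf : fdeg d 1 = 3 := by
    unfold fdeg
    rw [h0]
    decide
  unfold gdeg
  rw [hf]
  norm_num

lemma main3 {d : ℕ} (hd : 5 ≤ d) {a : ℕ} (ha : 3 ≤ a) :
    ∀ b, 1 ≤ b → gdeg d b + gdeg d a < gdeg d (a + b) := by
  intro b hb
  induction b, hb using Nat.le_induction with
  | base =>
    rw [g_one hd]
    have := gstep hd ha
    linarith
  | succ k hk ih =>
    have h1 : gdeg d (k+1) - gdeg d k ≤ gdeg d (a+k+1) - gdeg d (a+k) :=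
      gdiff_mono hd hk (by omega)
    have h2 : a + (k+1) = (a + k) + 1 := by ring
    rw [h2]
    linarith

lemma g22 {d : ℕ} (hd : 5 ≤ d) : gdeg d 2 + gdeg d 2 < gdeg d 4 := by
  have h0 : 2 + 3 - d = 0 := by omega
  have hf2 : fdeg d 2 = 9 := by
    unfold fdeg
    rw [h0]
    decide
  have hf4 : fdeg d 4 = 34 := by
    have hz : (4 + 3 - d).choose 3 = 0 := Nat.choose_eq_zero_of_lt (by omega)
    unfold fdeg
    rw [hz]
    decide
  unfold gdeg
  rw [hf2, hf4]
  norm_num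
  have h73 : Real.sqrt 73 ≤ 8.55 := by
    rw [show (8.55:ℝ) = Real.sqrt (8.55^2) from (Real.sqrt_sq (by norm_num)).symm]
    exact Real.sqrt_le_sqrt (by norm_num)
  have h273 : (16.52:ℝ) ≤ Real.sqrt 273 := by
    rw [show (16.52:ℝ) = Real.sqrt (16.52^2) from (Real.sqrt_sq (by norm_num)).symm]
    exact Real.sqrt_le_sqrt (by norm_num)
  linarith

theorem superadditive (d : ℕ) (hd : 5 ≤ d) (a a' : ℕ)
    (ha' : 1 ≤ a') (haa : a' ≤ a)
    (h1 : ¬(a = 1 ∧ a' = 1)) (h2 : ¬(a = 2 ∧ a' = 1)) :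
    gdeg d a + gdeg d a' < gdeg d (a + a') := by
  by_cases h3 : 3 ≤ a
  · have := main3 hd h3 a' ha'
    rw [add_comm (gdeg d a)]
    linarith
  · have hcase : (a = 1 ∧ a' = 1) ∨ (a = 2 ∧ a' = 1) ∨ (a = 2 ∧ a' = 2) := by omega
    rcases hcase with ⟨rfl, rfl⟩ | ⟨rfl, rfl⟩ | ⟨rfl, rfl⟩
    · exact absurd ⟨rfl, rfl⟩ h1
    · exact absurd ⟨rfl, rfl⟩ h2
    · exact g22 hd
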